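/- Let ≼ be a partial order on T and suppose a precedence-closed decision tree for (H, T, ≼) exists. Then min{covT(P) : P a precedence-closed sequence of distinct tests from T with |⋃_{t in P} ξ(t)| ≥ |U|/4} ≤ OPT_A, where OPT_A is the minimum of COST_A(D) over precedence-closed decision trees D for (H, T, ≼). In particular, the optimal value of the induced Precedence Constrained Min-Sum Set Cover instance (U, ξ(T), ≼, f = 1/4) is at most the optimal average-case cost of the Precedence Constrained Average Case Decision Tree instance (H, T, ≼). -/

import Mathlib

open Finset

universe u

inductive DTree (α : Type u) : Type u where
  | leaf : α → DTree α
  | node : Finset (Finset α) → (Finset α → DTree α) → DTree α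

variable {α : Type*} [DecidableEq α]

noncomputable def DTree.cost : DTree α → α → ℕ
  | .leaf _, _ => 0
  | .node t c, h =>
      if hR : ∃ R ∈ t, h ∈ R then 1 + (c hR.choose).cost h else 0

noncomputable def costW (H : Finset α) (D : DTree α) : ℕ := H.sup (fun h => D.cost h)

noncomputable def costA (H : Finset α) (D : DTree α) : ℕ := ∑ h ∈ H, D.cost h

def IsTest (H : Finset α) (t : Finset (Finset α)) : Prop :=
  (∀ R ∈ t, R.Nonempty) ∧ (∀ R ∈ t, ∀ R' ∈ t, R ≠ R' → Disjoint R R') ∧ t.sup id = H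

def Separates (H : Finset α) (T : Finset (Finset (Finset α))) : Prop :=
  ∀ h₁ ∈ H, ∀ h₂ ∈ H, h₁ ≠ h₂ → ∃ t ∈ T, ∃ R ∈ t, h₁ ∈ R ∧ h₂ ∉ R

def Valid (T : Finset (Finset (Finset α))) : Finset α → DTree α → Prop
  | Hv, .leaf h => Hv = {h}
  | Hv, .node t c => t ∈ T ∧ ∀ R ∈ t, (R ∩ Hv).Nonempty → Valid T (R ∩ Hv) (c R)

def PrecValid (T : Finset (Finset (Finset α)))
    (le : Finset (Finset α) → Finset (Finset α) → Prop) :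
    Finset (Finset (Finset α)) → Finset α → DTree α → Prop
  | _, Hv, .leaf h => Hv = {h}
  | P, Hv, .node t c =>
      t ∈ T ∧ (∀ t' ∈ T, le t' t → t' ≠ t → t' ∈ P) ∧
      ∀ R ∈ t, (R ∩ Hv).Nonempty → PrecValid T le (insert t P) (R ∩ Hv) (c R)

noncomputable def sumSizes : DTree α → Finset α → ℕ
  | .leaf _, _ => 0
  | .node t c, Hv =>
      Hv.card + ∑ R ∈ t.filter (fun R => (R ∩ Hv).Nonempty), sumSizes (c R) (R ∩ Hv)

noncomputable def nleaves : DTree α → Finset α → ℕ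
  | .leaf _, _ => 1
  | .node t c, Hv => ∑ R ∈ t.filter (fun R => (R ∩ Hv).Nonempty), nleaves (c R) (R ∩ Hv)

def xiT (H : Finset α) (t : Finset (Finset α)) : Finset α :=
  H.filter (fun h => ∃ R ∈ t, h ∈ R ∧ 4 * R.card ≤ 3 * H.card)

/-- Coverage time of  in the sequence  with respect to the covering map :
the (1-based) index of the first element of  covering , or |L| if none does. -/
def listCovTime {α β : Type*} [DecidableEq α] (f : β → Finset α) (L : List β) (u : α) : ℕ :=
  match L.findIdx? (fun b => decide (u ∈ f b)) with
  | some i => i + 1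
  | none => L.length

/-- A sequence is precedence-closed: every strict predecessor of an entry occurs
at an earlier position. -/
def PrecSeq {β : Type*} (T : Finset β) (le : β → β → Prop) (L : List β) : Prop :=
  ∀ (i : ℕ) (hi : i < L.length), ∀ t' ∈ T, le t' (L.get ⟨i, hi⟩) → t' ≠ L.get ⟨i, hi⟩ →
    ∃ j, j < i ∧ ∃ hj : j < L.length, L.get ⟨j, hj⟩ = t'

private lemma covTime_nil {β : Type*} (f : β → Finset α) (u : α) :
    listCovTime f ([] : List β) u = 0 := rfl

private lemma covTime_cons_pos {β : Type*} (f : β → Finset α) (b : β) (L : List β) (u : α)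
    (h : u ∈ f b) : listCovTime f (b :: L) u = 1 := by
  unfold listCovTime
  rw [List.findIdx?_cons]
  simp [h]

private lemma covTime_cons_neg {β : Type*} (f : β → Finset α) (b : β) (L : List β) (u : α)
    (h : u ∉ f b) : listCovTime f (b :: L) u = 1 + listCovTime f L u := by
  unfold listCovTime
  rw [List.findIdx?_cons, if_neg (by simpa using h)]
  cases hfi : List.findIdx? (fun b => decide (u ∈ f b)) L with
  | none => simp [Nat.add_comm]
  | some i => simp [Nat.add_comm]

private lemma heavy_path (H : Finset α) (hH : 2 ≤ H.card)
    (T : Finset (Finset (Finset α)))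
    (htest : ∀ t ∈ T, IsTest H t)
    (le : Finset (Finset α) → Finset (Finset α) → Prop) :
    ∀ D : DTree α, ∀ P Hv, PrecValid T le P Hv D → Hv ⊆ H →
      (∀ t' ∈ P, ∃ R ∈ t', Hv ⊆ R) →
      ∃ (L : List (Finset (Finset α))) (Hend : Finset α),
        (∀ t ∈ L, t ∈ T) ∧ L.Nodup ∧ (∀ t ∈ L, t ∉ P) ∧
        (∀ (i : ℕ) (hi : i < L.length), ∀ t' ∈ T, le t' (L.get ⟨i, hi⟩) → t' ≠ L.get ⟨i, hi⟩ →
          t' ∈ P ∨ ∃ j, j < i ∧ ∃ hj : j < L.length, L.get ⟨j, hj⟩ = t') ∧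
        Hend ⊆ Hv ∧ 4 * Hend.card ≤ 3 * H.card ∧
        (∀ u ∈ Hv, u ∉ Hend → u ∈ L.toFinset.sup (xiT H)) ∧
        (∀ u ∈ Hv, listCovTime (xiT H) L u ≤ D.cost u) := by
  have base : ∀ (D : DTree α) (P : Finset (Finset (Finset α))) (Hv : Finset α),
      4 * Hv.card ≤ 3 * H.card →
      ∃ (L : List (Finset (Finset α))) (Hend : Finset α),
        (∀ t ∈ L, t ∈ T) ∧ L.Nodup ∧ (∀ t ∈ L, t ∉ P) ∧
        (∀ (i : ℕ) (hi : i < L.length), ∀ t' ∈ T, le t' (L.get ⟨i, hi⟩) → t' ≠ L.get ⟨i, hi⟩ →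
          t' ∈ P ∨ ∃ j, j < i ∧ ∃ hj : j < L.length, L.get ⟨j, hj⟩ = t') ∧
        Hend ⊆ Hv ∧ 4 * Hend.card ≤ 3 * H.card ∧
        (∀ u ∈ Hv, u ∉ Hend → u ∈ L.toFinset.sup (xiT H)) ∧
        (∀ u ∈ Hv, listCovTime (xiT H) L u ≤ D.cost u) := by
    intro D P Hv hbound
    refine ⟨[], Hv, by simp, List.nodup_nil, by simp, ?_, subset_rfl, hbound, ?_, ?_⟩
    · intro i hi; exact absurd hi (by simp)
    · intro u hu hnu; exact absurd hu hnu
    · intro u _; rw [covTime_nil]; exact Nat.zero_le _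
  intro D
  induction D with
  | leaf h =>
    intro P Hv hpv hsub hP
    have hHv : Hv = {h} := hpv
    have : 4 * Hv.card ≤ 3 * H.card := by rw [hHv, Finset.card_singleton]; omega
    exact base (.leaf h) P Hv this
  | node t c ih =>
    intro P Hv hpv hsub hP
    obtain ⟨htT, hpred, hchild⟩ := hpv
    by_cases hbig : 4 * Hv.card ≤ 3 * H.card
    · exact base (.node t c) P Hv hbig
    · push_neg at hbig
      have hHvne : Hv.Nonempty := Finset.card_pos.mp (by omega)
      obtain ⟨hne, hdisj, hcover⟩ := htest t htT
      have hmem : ∀ u ∈ Hv, ∃ R ∈ t, u ∈ R := by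
        intro u hu
        have : u ∈ t.sup id := by rw [hcover]; exact hsub hu
        simpa using Finset.mem_sup.mp this
      have huniq : ∀ {R R' : Finset α} {u : α}, R ∈ t → R' ∈ t → u ∈ R → u ∈ R' → R = R' := by
        intro R R' u hR hR' h1 h2
        by_contra hne'
        exact (Finset.disjoint_left.mp (hdisj R hR R' hR' hne')) h1 h2
      by_cases htP : t ∈ P
      · -- the test has already been performed: skip it
        obtain ⟨Rp, hRp, hHvRp⟩ := hP t htP
        have heq : Rp ∩ Hv = Hv := Finset.inter_eq_right.mpr hHvRp
        have hchild' : PrecValid T le P Hv (c Rp) := by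
          have := hchild Rp hRp (by rw [heq]; exact hHvne)
          rwa [heq, Finset.insert_eq_self.mpr htP] at this
        obtain ⟨L, Hend, h1, h2, h3, h4, h5, h6, h7, h8⟩ := ih Rp P Hv hchild' hsub hP
        refine ⟨L, Hend, h1, h2, h3, h4, h5, h6, h7, ?_⟩
        intro u hu
        have hex : ∃ R ∈ t, u ∈ R := ⟨Rp, hRp, hHvRp hu⟩
        have hc : DTree.cost (.node t c) u = 1 + (c hex.choose).cost u := by
          rw [DTree.cost, dif_pos hex]
        have hchoose : hex.choose = Rp :=
          huniq hex.choose_spec.1 hRp hex.choose_spec.2 (hHvRp hu)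
        rw [hc, hchoose]
        exact le_trans (h8 u hu) (Nat.le_add_left _ 1)
      · -- perform the test, follow the heaviest reply
        obtain ⟨Rs, hRs, hmax⟩ := Finset.exists_max_image t (fun R => (R ∩ Hv).card) (by
          obtain ⟨u, hu⟩ := hHvne
          obtain ⟨R, hR, _⟩ := hmem u hu
          exact ⟨R, hR⟩)
        have hRsub : ∀ R ∈ t, R ⊆ H := by
          intro R hR
          rw [← hcover]
          exact Finset.le_sup (f := id) hR
        have hRsne : (Rs ∩ Hv).Nonempty := by
          obtain ⟨u, hu⟩ := hHvne
          obtain ⟨R, hR, huR⟩ := hmem u hu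
          have h1 : 1 ≤ (R ∩ Hv).card :=
            Finset.card_pos.mpr ⟨u, Finset.mem_inter.mpr ⟨huR, hu⟩⟩
          exact Finset.card_pos.mp (le_trans h1 (hmax R hR))
        have hsmall : ∀ R ∈ t, R ≠ Rs → 4 * R.card ≤ 3 * H.card := by
          intro R hR hRne
          by_contra hbig2
          push_neg at hbig2
          have e1 : (R ∩ Hv).card + (R ∪ Hv).card = R.card + Hv.card :=
            Finset.card_inter_add_card_union R Hv
          have e2 : (R ∪ Hv).card ≤ H.card :=
            Finset.card_le_card (Finset.union_subset (hRsub R hR) hsub)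
          have e3 : (R ∩ Hv).card ≤ (Rs ∩ Hv).card := hmax R hR
          have hdj : Disjoint (R ∩ Hv) (Rs ∩ Hv) :=
            (hdisj R hR Rs hRs hRne).mono Finset.inter_subset_left Finset.inter_subset_left
          have e4 : (R ∩ Hv).card + (Rs ∩ Hv).card ≤ Hv.card := by
            rw [← Finset.card_union_of_disjoint hdj]
            exact Finset.card_le_card
              (Finset.union_subset Finset.inter_subset_right Finset.inter_subset_right)
          have e5 : Hv.card ≤ H.card := Finset.card_le_card hsub
          omega
        have hchild' := hchild Rs hRs hRsne
        have hP' : ∀ t' ∈ insert t P, ∃ R ∈ t', Rs ∩ Hv ⊆ R := by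
          intro t' ht'
          rcases Finset.mem_insert.mp ht' with h | h
          · subst h; exact ⟨Rs, hRs, Finset.inter_subset_left⟩
          · obtain ⟨R, hR, hRR⟩ := hP t' h
            exact ⟨R, hR, Finset.Subset.trans Finset.inter_subset_right hRR⟩
        obtain ⟨L', Hend, h1, h2, h3, h4, h5, h6, h7, h8⟩ :=
          ih Rs (insert t P) (Rs ∩ Hv) hchild'
            (Finset.Subset.trans Finset.inter_subset_right hsub) hP'
        have htL' : t ∉ L' := fun hmem' => h3 t hmem' (Finset.mem_insert_self t P)
        refine ⟨t :: L', Hend, ?_, (List.nodup_cons).mpr ⟨htL', h2⟩, ?_, ?_,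
          Finset.Subset.trans h5 Finset.inter_subset_right, h6, ?_, ?_⟩
        · intro t'' ht''
          rcases List.mem_cons.mp ht'' with h | h
          · exact h ▸ htT
          · exact h1 t'' h
        · intro t'' ht''
          rcases List.mem_cons.mp ht'' with h | h
          · exact h ▸ htP
          · exact fun hmem' => h3 t'' h (Finset.mem_insert_of_mem hmem')
        · intro i hi t' ht' hle hne'
          match i, hi with
          | 0, hi =>
            exact Or.inl (hpred t' ht' hle hne')
          | (i + 1), hi =>
            have hi' : i < L'.length := by simpa using hi
            have hget : (t :: L').get ⟨i + 1, hi⟩ = L'.get ⟨i, hi'⟩ := rfl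
            rw [hget] at hle hne'
            rcases h4 i hi' t' ht' hle hne' with hin | ⟨j, hj, hjl, hgj⟩
            · rcases Finset.mem_insert.mp hin with h | h
              · exact Or.inr ⟨0, Nat.succ_pos i, by simpa using hi', h.symm⟩
              · exact Or.inl h
            · refine Or.inr ⟨j + 1, by omega, by simpa using Nat.succ_lt_succ hjl, ?_⟩
              exact hgj
        · intro u hu hnu
          by_cases hus : u ∈ Rs ∩ Hv
          · have hmem2 := h7 u hus hnu
            refine Finset.mem_of_subset (Finset.sup_mono ?_) hmem2
            rw [List.toFinset_cons]
            exact Finset.subset_insert _ _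
          · obtain ⟨R, hR, huR⟩ := hmem u hu
            have hRneRs : R ≠ Rs := by
              intro h
              exact hus (Finset.mem_inter.mpr ⟨h ▸ huR, hu⟩)
            have huxi : u ∈ xiT H t :=
              Finset.mem_filter.mpr ⟨hsub hu, R, hR, huR, hsmall R hR hRneRs⟩
            exact Finset.mem_sup.mpr ⟨t, by simp, huxi⟩
        · intro u hu
          have hex : ∃ R ∈ t, u ∈ R := hmem u hu
          have hc : DTree.cost (.node t c) u = 1 + (c hex.choose).cost u := by
            rw [DTree.cost, dif_pos hex]
          by_cases huxi : u ∈ xiT H t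
          · rw [covTime_cons_pos _ _ _ _ huxi, hc]
            exact Nat.le_add_right 1 _
          · have huRs : u ∈ Rs := by
              obtain ⟨R, hR, huR⟩ := hmem u hu
              by_contra hnot
              have hRneRs : R ≠ Rs := fun h => hnot (h ▸ huR)
              exact huxi (Finset.mem_filter.mpr ⟨hsub hu, R, hR, huR, hsmall R hR hRneRs⟩)
            have hchoose : hex.choose = Rs :=
              huniq hex.choose_spec.1 hRs hex.choose_spec.2 huRs
            rw [covTime_cons_neg _ _ _ _ huxi, hc, hchoose]
            exact Nat.add_le_add_left (h8 u (Finset.mem_inter.mpr ⟨huRs, hu⟩)) 1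

/-- the optimal value of the induced PCMSSC instance (f = 1/4) is at
most the optimal average-case cost of a precedence-closed decision tree. -/
theorem stmt16 {α : Type*} [DecidableEq α]
    (H : Finset α) (hH : 2 ≤ H.card)
    (T : Finset (Finset (Finset α)))
    (htest : ∀ t ∈ T, IsTest H t)
    (hsep : Separates H T)
    (le : Finset (Finset α) → Finset (Finset α) → Prop)
    (hrefl : ∀ t ∈ T, le t t)
    (htrans : ∀ t₁ ∈ T, ∀ t₂ ∈ T, ∀ t₃ ∈ T, le t₁ t₂ → le t₂ t₃ → le t₁ t₃)
    (hanti : ∀ t₁ ∈ T, ∀ t₂ ∈ T, le t₁ t₂ → le t₂ t₁ → t₁ = t₂) :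
    ∀ D : DTree α, PrecValid T le ∅ H D →
      ∃ L : List (Finset (Finset α)),
        (∀ t ∈ L, t ∈ T) ∧ L.Nodup ∧ PrecSeq T le L ∧
        (T.sup (xiT H)).card ≤ 4 * (L.toFinset.sup (xiT H)).card ∧
        (∑ u ∈ T.sup (xiT H), listCovTime (xiT H) L u) ≤ costA H D := by
  intro D hD
  obtain ⟨L, Hend, h1, h2, h3, h4, h5, h6, h7, h8⟩ :=
    heavy_path H hH T htest le D ∅ H hD Finset.Subset.rfl (by simp)
  have hU : T.sup (xiT H) ⊆ H := Finset.sup_le (fun t ht => Finset.filter_subset _ _)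
  refine ⟨L, h1, h2, ?_, ?_, ?_⟩
  · intro i hi t' ht' hle hne'
    rcases h4 i hi t' ht' hle hne' with h | h
    · exact absurd h (Finset.notMem_empty t')
    · exact h
  · have hcov : H \ Hend ⊆ L.toFinset.sup (xiT H) := by
      intro u hu
      have := Finset.mem_sdiff.mp hu
      exact h7 u this.1 this.2
    have h9 : (H \ Hend).card ≤ (L.toFinset.sup (xiT H)).card := Finset.card_le_card hcov
    have h10 : (H \ Hend).card = H.card - Hend.card := Finset.card_sdiff_of_subset h5
    have h11 : Hend.card ≤ H.card := Finset.card_le_card h5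
    have h12 : (T.sup (xiT H)).card ≤ H.card := Finset.card_le_card hU
    omega
  · calc ∑ u ∈ T.sup (xiT H), listCovTime (xiT H) L u
        ≤ ∑ u ∈ T.sup (xiT H), D.cost u := Finset.sum_le_sum (fun u hu => h8 u (hU hu))
      _ ≤ ∑ u ∈ H, D.cost u := Finset.sum_le_sum_of_subset hU
      _ = costA H D := rfl
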